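/- Let M be a finite matroid on ground set E = {e_1, …, e_n} with rank function Rank, let w_1 ≥ w_2 ≥ … ≥ w_n > 0 be weights ordered decreasingly (with the convention w_{n+1} = 0), let p ∈ [0,1] and ε ∈ [0,1]. Suppose Q ⊆ E satisfies E[ Rank(Q ∩ R ∩ {e_1,…,e_j}) ] ≥ (1−ε) · E[ Rank(R ∩ {e_1,…,e_j}) ] for every j ∈ {1,…,n} with w_j > w_{j+1}. Then E[ max{ w(T) : T ⊆ Q ∩ R, T independent in M } ] ≥ (1−ε) · E[ max{ w(T) : T ⊆ R, T independent in M } ]. -/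
import Mathlib


open Finset

noncomputable section

variable {E : Type*} [Fintype E] [DecidableEq E]

/-- Probability that an independent-inclusion random subset of `E`, in which each element `e`
is included independently with probability `π e`, is exactly the set `A`. -/
def prodWeight (π : E → ℝ) (A : Finset E) : ℝ :=
  (∏ e ∈ A, π e) * ∏ e ∈ Aᶜ, (1 - π e)

/-- Expectation of `g` under the independent-inclusion random subset with marginals `π`. -/
def expec (π : E → ℝ) (g : Finset E → ℝ) : ℝ :=
  ∑ A : Finset E, prodWeight π A * g A

/-- Total (additive) weight of a finite set. -/
def setWeight (w : E → ℝ) (T : Finset E) : ℝ := ∑ e ∈ T, w e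

/-- Value of a best feasible (w.r.t. `𝓘`) subset of `S`, for the objective `f`. -/
def bestVal (𝓘 : Set (Finset E)) (f : Finset E → ℝ) (S : Finset E) : ℝ :=
  sSup (f '' {T | T ⊆ S ∧ T ∈ 𝓘})

/-- A (finite) matroid on the ground set `E`, given by its independent sets. -/
structure FinMatroid (E : Type*) [Fintype E] [DecidableEq E] where
  Indep : Finset E → Prop
  empty_indep : Indep ∅
  indep_subset : ∀ ⦃S T : Finset E⦄, Indep T → S ⊆ T → Indep S
  indep_exchange : ∀ ⦃S T : Finset E⦄, Indep S → Indep T → S.card < T.card →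
    ∃ e ∈ T, e ∉ S ∧ Indep (insert e S)

/-- The rank function of a matroid: the maximum cardinality of an independent subset of `S`. -/
def FinMatroid.rank (M : FinMatroid E) (S : Finset E) : ℕ :=
  sSup {n | ∃ T ⊆ S, M.Indep T ∧ T.card = n}

/-- `I_1 ∪ ⋯ ∪ I_j` (sets are indexed starting from `1`). -/
def prefixUnion (I : ℕ → Finset E) (j : ℕ) : Finset E :=
  (Finset.Icc 1 j).biUnion I

/-- A nested system of spanning sets for the set system on ground set `G` with rank
function `rk`: each `I_j` lies outside `I_{1:j-1}` and is spanning (full rank) in the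
deletion minor obtained by removing `I_{1:j-1}` from `G`. -/
def IsNSS (rk : Finset E → ℕ) (G : Finset E) (τ : ℕ) (I : ℕ → Finset E) : Prop :=
  ∀ j ∈ Finset.Icc 1 τ,
    I j ⊆ G \ prefixUnion I (j - 1) ∧ rk (I j) = rk (G \ prefixUnion I (j - 1))

/-- `I` is a maximum-`w`-weight independent set of the restriction of `M` to `G`. -/
def IsMaxWeightIndep (M : FinMatroid E) (w : E → ℝ) (G : Finset E) (I : Finset E) : Prop :=
  I ⊆ G ∧ M.Indep I ∧ ∀ J ⊆ G, M.Indep J → setWeight w J ≤ setWeight w I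

/-- `I` is a maximum-`w`-weight base of the restriction (deletion minor) of `M` to `G`. -/
def IsMaxWeightBase (M : FinMatroid E) (w : E → ℝ) (G : Finset E) (I : Finset E) : Prop :=
  I ⊆ G ∧ M.Indep I ∧ M.rank I = M.rank G ∧
    ∀ J ⊆ G, M.Indep J → M.rank J = M.rank G → setWeight w J ≤ setWeight w I

/-- The set `{e_1, …, e_j}` of the `j` heaviest elements (elements of `Fin n` are
identified with `e_1, …, e_n`, so `e_i` is the element `i - 1 : Fin n`). -/
def prefixSet (n j : ℕ) : Finset (Fin n) :=
  Finset.univ.filter fun x => (x : ℕ) + 1 ≤ j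


section Aux

lemma rank_spec (M : FinMatroid E) (S : Finset E) :
    ∃ T ⊆ S, M.Indep T ∧ T.card = M.rank S := by
  have hne : {k | ∃ T ⊆ S, M.Indep T ∧ T.card = k}.Nonempty :=
    ⟨0, ∅, Finset.empty_subset _, M.empty_indep, Finset.card_empty⟩
  have hbdd : BddAbove {k | ∃ T ⊆ S, M.Indep T ∧ T.card = k} := by
    refine ⟨S.card, ?_⟩
    rintro m ⟨T, hTS, _, rfl⟩
    exact Finset.card_le_card hTS
  simpa [FinMatroid.rank] using Nat.sSup_mem hne hbdd

lemma card_le_rank (M : FinMatroid E) {S T : Finset E} (hTS : T ⊆ S) (hT : M.Indep T) :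
    T.card ≤ M.rank S := by
  have hbdd : BddAbove {k | ∃ T ⊆ S, M.Indep T ∧ T.card = k} := by
    refine ⟨S.card, ?_⟩
    rintro m ⟨T, hTS, _, rfl⟩
    exact Finset.card_le_card hTS
  exact le_csSup hbdd ⟨T, hTS, hT, rfl⟩

lemma exists_extend (M : FinMatroid E) (S : Finset E) :
    ∀ k I, M.rank S - I.card ≤ k → I ⊆ S → M.Indep I →
      ∃ I', I ⊆ I' ∧ I' ⊆ S ∧ M.Indep I' ∧ I'.card = M.rank S := by
  intro k
  induction k with
  | zero =>
    intro I hk hIS hI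
    have h1 : I.card ≤ M.rank S := card_le_rank M hIS hI
    exact ⟨I, subset_rfl, hIS, hI, le_antisymm h1 (by omega)⟩
  | succ k ih =>
    intro I hk hIS hI
    by_cases hc : I.card = M.rank S
    · exact ⟨I, subset_rfl, hIS, hI, hc⟩
    · have h1 : I.card < M.rank S := lt_of_le_of_ne (card_le_rank M hIS hI) hc
      obtain ⟨T, hTS, hT, hTc⟩ := rank_spec M S
      obtain ⟨e, heT, heI, hins⟩ := M.indep_exchange hI hT (by omega)
      have hcard : (insert e I).card = I.card + 1 := Finset.card_insert_of_notMem heI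
      obtain ⟨I', h1', h2', h3', h4'⟩ := ih (insert e I) (by omega)
        (Finset.insert_subset (hTS heT) hIS) hins
      exact ⟨I', (Finset.subset_insert e I).trans h1', h2', h3', h4'⟩

lemma greedy_chain (M : FinMatroid E) (F : ℕ → Finset E) (hmono : ∀ j, F j ⊆ F (j + 1)) :
    ∀ m, ∃ I, M.Indep I ∧ I ⊆ F m ∧ ∀ j ≤ m, M.rank (F j) ≤ (I ∩ F j).card := by
  intro m
  induction m with
  | zero =>
    obtain ⟨I, _, hIS, hI, hc⟩ := exists_extend M (F 0) (M.rank (F 0)) ∅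
      (by simp) (Finset.empty_subset _) M.empty_indep
    refine ⟨I, hI, hIS, fun j hj => ?_⟩
    interval_cases j
    rw [Finset.inter_eq_left.mpr hIS, hc]
  | succ m ih =>
    obtain ⟨I, hI, hIFm, hcard⟩ := ih
    obtain ⟨I', hII', hI'S, hI', hc'⟩ := exists_extend M (F (m + 1)) (M.rank (F (m + 1))) I
      (by omega) (hIFm.trans (hmono m)) hI
    refine ⟨I', hI', hI'S, fun j hj => ?_⟩
    rcases Nat.lt_or_ge j (m + 1) with h | h
    · calc M.rank (F j) ≤ (I ∩ F j).card := hcard j (by omega)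
        _ ≤ (I' ∩ F j).card := Finset.card_le_card (Finset.inter_subset_inter hII' subset_rfl)
    · have hj' : j = m + 1 := by omega
      subst hj'
      rw [Finset.inter_eq_left.mpr hI'S, hc']

lemma telescope (w : ℕ → ℝ) : ∀ n a, a ≤ n + 1 →
    ∑ j ∈ Finset.Icc a n, (w j - w (j + 1)) = w a - w (n + 1) := by
  intro n
  induction n with
  | zero =>
    intro a ha
    interval_cases a <;> simp
  | succ n ih =>
    intro a ha
    rcases Nat.lt_or_ge a (n + 2) with h | h
    · rw [Finset.sum_Icc_succ_top (by omega), ih a (by omega)]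
      ring
    · have : a = n + 2 := by omega
      subst this
      simp

lemma weight_formula (n : ℕ) (w : ℕ → ℝ) (hwlast : w (n + 1) = 0) (T : Finset (Fin n)) :
    setWeight (fun x : Fin n => w ((x : ℕ) + 1)) T
      = ∑ j ∈ Finset.Icc 1 n, (w j - w (j + 1)) * ((T ∩ prefixSet n j).card : ℝ) := by
  have key : ∀ x : Fin n, w ((x : ℕ) + 1)
      = ∑ j ∈ Finset.Icc 1 n, if (x : ℕ) + 1 ≤ j then (w j - w (j + 1)) else 0 := by
    intro x
    rw [← Finset.sum_filter]
    have hset : (Finset.Icc 1 n).filter (fun j => (x : ℕ) + 1 ≤ j)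
        = Finset.Icc ((x : ℕ) + 1) n := by
      ext j
      simp only [Finset.mem_filter, Finset.mem_Icc]
      omega
    rw [hset, telescope w n ((x : ℕ) + 1) (by omega), hwlast, sub_zero]
  calc setWeight (fun x : Fin n => w ((x : ℕ) + 1)) T
      = ∑ x ∈ T, ∑ j ∈ Finset.Icc 1 n, if (x : ℕ) + 1 ≤ j then (w j - w (j + 1)) else 0 :=
        Finset.sum_congr rfl fun x _ => key x
    _ = ∑ j ∈ Finset.Icc 1 n, ∑ x ∈ T, if (x : ℕ) + 1 ≤ j then (w j - w (j + 1)) else 0 :=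
        Finset.sum_comm
    _ = ∑ j ∈ Finset.Icc 1 n, (w j - w (j + 1)) * ((T ∩ prefixSet n j).card : ℝ) := by
        refine Finset.sum_congr rfl fun j _ => ?_
        rw [← Finset.sum_filter]
        have hfe : T.filter (fun x : Fin n => (x : ℕ) + 1 ≤ j) = T ∩ prefixSet n j := by
          ext x
          simp [prefixSet, Finset.mem_filter, Finset.mem_inter]
        rw [hfe, Finset.sum_const, nsmul_eq_mul, mul_comm]

lemma bestVal_eq (n : ℕ) (M : FinMatroid (Fin n)) (w : ℕ → ℝ)
    (hwpos : ∀ j ∈ Finset.Icc 1 n, 0 < w j)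
    (hwdec : ∀ i j, 1 ≤ i → i ≤ j → j ≤ n → w j ≤ w i)
    (hwlast : w (n + 1) = 0) (S : Finset (Fin n)) :
    bestVal {T | M.Indep T} (setWeight fun x : Fin n => w ((x : ℕ) + 1)) S
      = ∑ j ∈ Finset.Icc 1 n, (w j - w (j + 1)) * (M.rank (S ∩ prefixSet n j) : ℝ) := by
  have hcnn : ∀ j ∈ Finset.Icc 1 n, 0 ≤ w j - w (j + 1) := by
    intro j hj
    simp only [Finset.mem_Icc] at hj
    rcases Nat.lt_or_ge j n with h | h
    · have := hwdec j (j + 1) hj.1 (by omega) (by omega)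
      linarith
    · have hj' : j = n := le_antisymm hj.2 h
      have h2 : w (j + 1) = 0 := by rw [hj']; exact hwlast
      have := hwpos j (by simp only [Finset.mem_Icc]; omega)
      linarith
  have hub : ∀ T, T ⊆ S → M.Indep T →
      setWeight (fun x : Fin n => w ((x : ℕ) + 1)) T
        ≤ ∑ j ∈ Finset.Icc 1 n, (w j - w (j + 1)) * (M.rank (S ∩ prefixSet n j) : ℝ) := by
    intro T hTS hT
    rw [weight_formula n w hwlast T]
    refine Finset.sum_le_sum fun j hj => mul_le_mul_of_nonneg_left ?_ (hcnn j hj)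
    exact_mod_cast card_le_rank M (Finset.inter_subset_inter hTS subset_rfl)
      (M.indep_subset hT Finset.inter_subset_left)
  have hmono : ∀ j, S ∩ prefixSet n j ⊆ S ∩ prefixSet n (j + 1) := by
    intro j
    refine Finset.inter_subset_inter subset_rfl ?_
    intro x
    simp only [prefixSet, Finset.mem_filter, Finset.mem_univ, true_and]
    omega
  obtain ⟨I, hI, hIFn, hcard⟩ := greedy_chain M (fun j => S ∩ prefixSet n j) hmono n
  have hIS : I ⊆ S := hIFn.trans Finset.inter_subset_left
  have hattain : setWeight (fun x : Fin n => w ((x : ℕ) + 1)) I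
      = ∑ j ∈ Finset.Icc 1 n, (w j - w (j + 1)) * (M.rank (S ∩ prefixSet n j) : ℝ) := by
    rw [weight_formula n w hwlast I]
    refine Finset.sum_congr rfl fun j hj => ?_
    simp only [Finset.mem_Icc] at hj
    have heq : I ∩ prefixSet n j = I ∩ (S ∩ prefixSet n j) := by
      ext x
      simp only [Finset.mem_inter]
      exact ⟨fun ⟨h1, h2⟩ => ⟨h1, hIS h1, h2⟩, fun ⟨h1, _, h3⟩ => ⟨h1, h3⟩⟩
    have hle : (I ∩ (S ∩ prefixSet n j)).card ≤ M.rank (S ∩ prefixSet n j) :=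
      card_le_rank M Finset.inter_subset_right (M.indep_subset hI Finset.inter_subset_left)
    have hge : M.rank (S ∩ prefixSet n j) ≤ (I ∩ (S ∩ prefixSet n j)).card := hcard j hj.2
    rw [heq]
    congr 1
    exact_mod_cast le_antisymm hle hge
  unfold bestVal
  apply le_antisymm
  · apply csSup_le
    · exact ⟨setWeight (fun x : Fin n => w ((x : ℕ) + 1)) ∅,
        ∅, ⟨Finset.empty_subset _, M.empty_indep⟩, rfl⟩
    · rintro v ⟨T, ⟨hTS, hT⟩, rfl⟩
      exact hub T hTS hT
  · have hbdd : BddAbove ((setWeight fun x : Fin n => w ((x : ℕ) + 1)) ''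
        {T | T ⊆ S ∧ T ∈ {T | M.Indep T}}) := by
      refine ⟨∑ j ∈ Finset.Icc 1 n, (w j - w (j + 1)) * (M.rank (S ∩ prefixSet n j) : ℝ), ?_⟩
      rintro v ⟨T, ⟨hTS, hT⟩, rfl⟩
      exact hub T hTS hT
    exact le_csSup hbdd ⟨I, ⟨hIS, hI⟩, hattain⟩

lemma expec_sum_smul (π : E → ℝ) {ι : Type*} (s : Finset ι) (c : ι → ℝ)
    (g : ι → Finset E → ℝ) :
    expec π (fun A => ∑ j ∈ s, c j * g j A) = ∑ j ∈ s, c j * expec π (g j) := by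
  unfold expec
  simp only [Finset.mul_sum]
  rw [Finset.sum_comm]
  refine Finset.sum_congr rfl fun j _ => ?_
  refine Finset.sum_congr rfl fun A _ => by ring

end Aux

/-- Weighted-to-unweighted reduction for matroid sparsification:
if a set `Q` preserves (up to a factor `1 − ε`) the expected rank of the active elements
within every weight-prefix `{e_1, …, e_j}` with `w_j > w_{j+1}`, then it preserves the
expected maximum weight of an independent set of active elements up to `1 − ε`. -/
theorem stmt_7 (n : ℕ) (M : FinMatroid (Fin n)) (w : ℕ → ℝ)
    (hwpos : ∀ j ∈ Finset.Icc 1 n, 0 < w j)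
    (hwdec : ∀ i j, 1 ≤ i → i ≤ j → j ≤ n → w j ≤ w i)
    (hwlast : w (n + 1) = 0)
    (p : ℝ) (hp0 : 0 ≤ p) (hp1 : p ≤ 1)
    (ε : ℝ) (hε0 : 0 ≤ ε) (hε1 : ε ≤ 1)
    (Q : Finset (Fin n))
    (hyp : ∀ j ∈ Finset.Icc 1 n, w (j + 1) < w j →
      (1 - ε) * expec (fun _ => p) (fun A => (M.rank (A ∩ prefixSet n j) : ℝ))
        ≤ expec (fun _ => p) (fun A => (M.rank (Q ∩ A ∩ prefixSet n j) : ℝ))) :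
    (1 - ε) * expec (fun _ => p)
        (fun A => bestVal {T | M.Indep T} (setWeight fun x : Fin n => w ((x : ℕ) + 1)) A)
      ≤ expec (fun _ => p)
        (fun A => bestVal {T | M.Indep T} (setWeight fun x : Fin n => w ((x : ℕ) + 1)) (Q ∩ A)) := by
  have hbv : ∀ S : Finset (Fin n),
      bestVal {T | M.Indep T} (setWeight fun x : Fin n => w ((x : ℕ) + 1)) S
        = ∑ j ∈ Finset.Icc 1 n, (w j - w (j + 1)) * (M.rank (S ∩ prefixSet n j) : ℝ) :=
    bestVal_eq n M w hwpos hwdec hwlast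
  have hcnn : ∀ j ∈ Finset.Icc 1 n, 0 ≤ w j - w (j + 1) := by
    intro j hj
    simp only [Finset.mem_Icc] at hj
    rcases Nat.lt_or_ge j n with h | h
    · have := hwdec j (j + 1) hj.1 (by omega) (by omega)
      linarith
    · have hj' : j = n := le_antisymm hj.2 h
      have h2 : w (j + 1) = 0 := by rw [hj']; exact hwlast
      have := hwpos j (by simp only [Finset.mem_Icc]; omega)
      linarith
  have e1 : expec (fun _ => p)
      (fun A => bestVal {T | M.Indep T} (setWeight fun x : Fin n => w ((x : ℕ) + 1)) A)
      = ∑ j ∈ Finset.Icc 1 n, (w j - w (j + 1)) *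
          expec (fun _ => p) (fun A => (M.rank (A ∩ prefixSet n j) : ℝ)) := by
    rw [show (fun A => bestVal {T | M.Indep T}
        (setWeight fun x : Fin n => w ((x : ℕ) + 1)) A)
        = fun A => ∑ j ∈ Finset.Icc 1 n,
            (w j - w (j + 1)) * (M.rank (A ∩ prefixSet n j) : ℝ) from funext fun A => hbv A]
    exact expec_sum_smul _ _ _ _
  have e2 : expec (fun _ => p)
      (fun A => bestVal {T | M.Indep T} (setWeight fun x : Fin n => w ((x : ℕ) + 1)) (Q ∩ A))
      = ∑ j ∈ Finset.Icc 1 n, (w j - w (j + 1)) *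
          expec (fun _ => p) (fun A => (M.rank (Q ∩ A ∩ prefixSet n j) : ℝ)) := by
    rw [show (fun A => bestVal {T | M.Indep T}
        (setWeight fun x : Fin n => w ((x : ℕ) + 1)) (Q ∩ A))
        = fun A => ∑ j ∈ Finset.Icc 1 n,
            (w j - w (j + 1)) * (M.rank (Q ∩ A ∩ prefixSet n j) : ℝ) from
      funext fun A => hbv (Q ∩ A)]
    exact expec_sum_smul _ _ _ _
  rw [e1, e2, Finset.mul_sum]
  refine Finset.sum_le_sum fun j hj => ?_
  by_cases hlt : w (j + 1) < w j
  · have h := hyp j hj hlt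
    have hc := hcnn j hj
    calc (1 - ε) * ((w j - w (j + 1)) *
          expec (fun _ => p) (fun A => (M.rank (A ∩ prefixSet n j) : ℝ)))
        = (w j - w (j + 1)) * ((1 - ε) *
          expec (fun _ => p) (fun A => (M.rank (A ∩ prefixSet n j) : ℝ))) := by ring
      _ ≤ (w j - w (j + 1)) *
          expec (fun _ => p) (fun A => (M.rank (Q ∩ A ∩ prefixSet n j) : ℝ)) :=
        mul_le_mul_of_nonneg_left h hc
  · have hz : w j - w (j + 1) = 0 := le_antisymm (by linarith [not_lt.mp hlt]) (hcnn j hj)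
    rw [hz]
    simp
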